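/- Consider a fan configuration around a cell center $x_c \in \mathbb{R}^2$ with neighbor centers $x_{d_1},\dots,x_{d_k}$ ($k \ge 3$, indices cyclic modulo $k$) and dual triangles $T_i$ with signed areas $A_i \ne 0$. Let $\phi_c, \phi_{d_1},\dots,\phi_{d_k} : \mathbb{R} \to \mathbb{R}$ be arbitrary functions of time and let $j_1,\dots,j_k : \mathbb{R} \to \mathbb{R}^2$ be differentiable functions satisfying the semi-discrete gradient-flux evolution $j_i'(t) = -G_i(t)$, where $G_i(t) := \tfrac{1}{A_i}\big(N^i_c\,\phi_c(t) + N^i_{d_i}\,\phi_{d_i}(t) + N^i_{d_{i+1}}\,\phi_{d_{i+1}}(t)\big)$. Then the discrete curl around the cell is conserved: the function $t \mapsto \sum_{i=1}^{k} (R\,N^i_c) \cdot j_i(t)$ has zero derivative, i.e. is constant in time (curl-free involution, Proposition 3.2). -/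

import Mathlib

/-- Counterclockwise rotation by 90 degrees in the plane. -/
def rot (a : ℝ × ℝ) : ℝ × ℝ := (-a.2, a.1)

/-- Planar cross product. -/
def cross (a b : ℝ × ℝ) : ℝ := a.1 * b.2 - a.2 * b.1

/-- Planar dot product. -/
def dot (a b : ℝ × ℝ) : ℝ := a.1 * b.1 + a.2 * b.2

lemma key (xc xdi xdi1 : ℝ × ℝ) (A : ℝ)
    (hA : A = (1/2) * cross (xdi - xc) (xdi1 - xc)) (hA0 : A ≠ 0)
    (pc pi pi1 : ℝ) :
    dot (rot ((1/2:ℝ) • rot (xdi1 - xdi)))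
      (-((1 / A) • (pc • ((1/2:ℝ) • rot (xdi1 - xdi)) + pi • ((1/2:ℝ) • rot (xc - xdi1))
        + pi1 • ((1/2:ℝ) • rot (xdi - xc))))) = -(1/2) * (pi - pi1) := by
  have hD : (xdi.1 - xc.1) * (xdi1.2 - xc.2) - (xdi.2 - xc.2) * (xdi1.1 - xc.1) ≠ 0 := by
    intro h
    apply hA0
    rw [hA]
    simp [cross, h]
  rw [hA]
  simp only [rot, dot, cross, Prod.smul_mk, Prod.fst_sub, Prod.snd_sub, smul_eq_mul,
    Prod.mk_add_mk, Prod.neg_mk, Prod.fst_add, Prod.snd_add, Prod.fst_neg, Prod.snd_neg]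
  field_simp
  ring

theorem curl_free_involution (k : ℕ) [NeZero k] (hk : 3 ≤ k)
    (xc : ℝ × ℝ) (xd : Fin k → ℝ × ℝ)
    (Nc Nd Nd1 : Fin k → ℝ × ℝ) (A : Fin k → ℝ)
    (hNc : ∀ i : Fin k, Nc i = (1 / 2 : ℝ) • rot (xd (i + 1) - xd i))
    (hNd : ∀ i : Fin k, Nd i = (1 / 2 : ℝ) • rot (xc - xd (i + 1)))
    (hNd1 : ∀ i : Fin k, Nd1 i = (1 / 2 : ℝ) • rot (xd i - xc))
    (hA : ∀ i : Fin k, A i = (1 / 2) * cross (xd i - xc) (xd (i + 1) - xc))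
    (hA0 : ∀ i : Fin k, A i ≠ 0)
    (φc : ℝ → ℝ) (φd : Fin k → ℝ → ℝ) (G : Fin k → ℝ → ℝ × ℝ)
    (hG : ∀ (i : Fin k) (t : ℝ),
      G i t = (1 / A i) • (φc t • Nc i + φd i t • Nd i + φd (i + 1) t • Nd1 i))
    (j : Fin k → ℝ → ℝ × ℝ)
    (hj : ∀ (i : Fin k) (t : ℝ), HasDerivAt (j i) (-(G i t)) t) :
    (∀ t : ℝ, HasDerivAt (fun s => ∑ i : Fin k, dot (rot (Nc i)) (j i s)) 0 t) ∧
      (∀ t₁ t₂ : ℝ,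
        ∑ i : Fin k, dot (rot (Nc i)) (j i t₁) = ∑ i : Fin k, dot (rot (Nc i)) (j i t₂)) := by
  have hterm : ∀ (i : Fin k) (t : ℝ), dot (rot (Nc i)) (-(G i t))
      = -(1/2) * (φd i t - φd (i + 1) t) := by
    intro i t
    rw [hG, hNc, hNd, hNd1]
    exact key xc (xd i) (xd (i+1)) (A i) (hA i) (hA0 i) (φc t) (φd i t) (φd (i+1) t)
  have hderiv : ∀ t : ℝ,
      HasDerivAt (fun s => ∑ i : Fin k, dot (rot (Nc i)) (j i s)) 0 t := by
    intro t
    have h1 : HasDerivAt (fun s => ∑ i : Fin k, dot (rot (Nc i)) (j i s))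
        (∑ i : Fin k, dot (rot (Nc i)) (-(G i t))) t := by
      apply HasDerivAt.fun_sum
      intro i _
      set L : (ℝ × ℝ) →L[ℝ] ℝ :=
        (rot (Nc i)).1 • ContinuousLinearMap.fst ℝ ℝ ℝ
          + (rot (Nc i)).2 • ContinuousLinearMap.snd ℝ ℝ ℝ with hL
      have h := L.hasFDerivAt.comp_hasDerivAt t (hj i t)
      simpa [hL, dot, Function.comp_def] using h
    have hshift : (∑ i : Fin k, φd i t) = ∑ i : Fin k, φd (i + 1) t :=
      (Fintype.sum_equiv (Equiv.addRight (1 : Fin k)) _ _ (fun i => rfl)).symm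
    have hsum : (∑ i : Fin k, dot (rot (Nc i)) (-(G i t))) = 0 := by
      simp only [hterm]
      rw [← Finset.mul_sum, Finset.sum_sub_distrib, hshift, sub_self, mul_zero]
    rwa [hsum] at h1
  refine ⟨hderiv, fun t₁ t₂ => ?_⟩
  exact is_const_of_deriv_eq_zero (f := fun s => ∑ i : Fin k, dot (rot (Nc i)) (j i s))
    (fun x => (hderiv x).differentiableAt) (fun x => (hderiv x).deriv) t₁ t₂
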